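/- Let G be a group with a choice of generators w ↦ w̄ from W whose gross cogrowth satisfies θ < 1 (i.e., G is non-amenable). Then for every ε > 0, the set of words w such that every contiguous subword v of w with |v| ≥ ε·|w| satisfies |v̄| ≥ ((1−θ)/θ − ε)·|v| is exponentially generic. -/

import Mathlib

open Filter

namespace GenericSubgroups

/-- A word over the alphabet `Fin m × Bool` (generator index, with `true` = formal inverse). -/
abbrev Word (m : ℕ) := List (Fin m × Bool)

/-- The disk of radius `n` : words of length at most `n`. -/
def ball (m n : ℕ) : Set (Word m) := {w | w.length ≤ n}

/-- The sphere of radius `n` : words of length exactly `n`. -/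
def sphere (m n : ℕ) : Set (Word m) := {w | w.length = n}

/-- A set of words is exponentially negligible. -/
def ExpNegligible {m : ℕ} (X : Set (Word m)) : Prop :=
  ∃ α : ℝ, 0 < α ∧ α < 1 ∧
    ∀ᶠ n in atTop, ((X ∩ ball m n).ncard : ℝ) / ((ball m n).ncard : ℝ) ≤ α ^ n

/-- A set of words is exponentially generic if its complement is exponentially negligible. -/
def ExpGeneric {m : ℕ} (X : Set (Word m)) : Prop := ExpNegligible Xᶜ

/-- Disk of radius `n` in the set of `k`-tuples of words. -/
def ballK (m k n : ℕ) : Set (Fin k → Word m) := {w | ∀ i, (w i).length ≤ n}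

def ExpNegligibleK {m k : ℕ} (X : Set (Fin k → Word m)) : Prop :=
  ∃ α : ℝ, 0 < α ∧ α < 1 ∧
    ∀ᶠ n in atTop, ((X ∩ ballK m k n).ncard : ℝ) / ((ballK m k n).ncard : ℝ) ≤ α ^ n

def ExpGenericK {m k : ℕ} (X : Set (Fin k → Word m)) : Prop := ExpNegligibleK Xᶜ

variable {G : Type*} [Group G]

/-- Evaluation of a word in `G`, determined by the family `g` of generators. -/
def eval {m : ℕ} (g : Fin m → G) (w : Word m) : G :=
  (w.map (fun p => if p.2 then (g p.1)⁻¹ else g p.1)).prod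

/-- Word length of an element of `G`. -/
noncomputable def wlen {m : ℕ} (g : Fin m → G) (x : G) : ℕ :=
  sInf {n | ∃ w : Word m, w.length = n ∧ eval g w = x}

/-- Word metric on `G`. -/
noncomputable def wdist {m : ℕ} (g : Fin m → G) (x y : G) : ℕ := wlen g (x⁻¹ * y)

/-- Words of length exactly `n` representing the identity. -/
def V {m : ℕ} (g : Fin m → G) (n : ℕ) : Set (Word m) :=
  {w | w.length = n ∧ eval g w = 1}

/-- The gross cogrowth `θ = limsup (1/n) log_{2m} |V_n|`. -/
noncomputable def cogrowth {m : ℕ} (g : Fin m → G) : ℝ :=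
  limsup (fun n : ℕ => Real.logb (2 * m : ℝ) ((V g n).ncard : ℝ) / (n : ℝ)) atTop

/-- The four-point (quadrilateral) condition with constant `δ` for the word metric. -/
def FourPoint {m : ℕ} (g : Fin m → G) (δ : ℝ) : Prop :=
  ∀ p q r s : G,
    (wdist g p s : ℝ) + (wdist g q r : ℝ) ≤
      2 * δ + max ((wdist g p q : ℝ) + (wdist g r s : ℝ)) ((wdist g p r : ℝ) + (wdist g q s : ℝ))

/-- The Gromov product `(x|y)_1` with respect to the word metric. -/
noncomputable def gp {m : ℕ} (g : Fin m → G) (x y : G) : ℝ :=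
  ((wlen g x : ℝ) + (wlen g y : ℝ) - (wlen g (x⁻¹ * y) : ℝ)) / 2

/-- `x^e` where `e : Bool`, `true` meaning inverse. -/
def powB (x : G) (e : Bool) : G := if e then x⁻¹ else x

/-- Formal inverse of a word. -/
def winv {m : ℕ} (w : Word m) : Word m := (w.reverse).map (fun p => (p.1, !p.2))


-- ### basic lemmas
variable {m : ℕ}

lemma eval_append (g : Fin m → G) (u v : Word m) : eval g (u ++ v) = eval g u * eval g v := by
  simp [eval]

lemma length_winv (w : Word m) : (winv w).length = w.length := by simp [winv]

lemma eval_winv (g : Fin m → G) (w : Word m) : eval g (winv w) = (eval g w)⁻¹ := by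
  induction w with
  | nil => simp [eval, winv]
  | cons a w ih =>
    have h : winv (a :: w) = winv w ++ [(a.1, !a.2)] := by simp [winv]
    rw [h, eval_append, ih, show (a :: w) = [a] ++ w from rfl, eval_append]
    simp [eval]
    cases a.2 <;> simp

lemma wlen_exists (g : Fin m → G) (v : Word m) :
    ∃ u : Word m, u.length = wlen g (eval g v) ∧ eval g u = eval g v :=
  Nat.sInf_mem (⟨v.length, v, rfl, rfl⟩ : {n | ∃ w : Word m, w.length = n ∧ eval g w = eval g v}.Nonempty)

lemma sphere_finite (m n : ℕ) : (sphere m n).Finite := List.finite_length_eq _ n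
lemma ball_finite (m n : ℕ) : (ball m n).Finite := List.finite_length_le _ n

lemma sphere_ncard (m n : ℕ) : (sphere m n).ncard = (2*m)^n := by
  rw [← Nat.card_coe_set_eq]
  have e : sphere m n ≃ List.Vector (Fin m × Bool) n := Equiv.refl _
  rw [Nat.card_congr e, Nat.card_eq_fintype_card, card_vector]
  simp [mul_comm]

lemma ball_ncard_ge (m n : ℕ) : (2*m)^n ≤ (ball m n).ncard := by
  rw [← sphere_ncard]
  exact Set.ncard_le_ncard (fun w hw => le_of_eq hw) (ball_finite m n)

lemma V_subset_sphere (g : Fin m → G) (n : ℕ) : V g n ⊆ sphere m n := fun w hw => hw.1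

lemma V_ncard_le (g : Fin m → G) (n : ℕ) : (V g n).ncard ≤ (2*m)^n := by
  rw [← sphere_ncard]
  exact Set.ncard_le_ncard (V_subset_sphere g n) (sphere_finite m n)

lemma ncard_biUnion_le {ι α : Type*} (s : Finset ι) (f : ι → Set α) :
    (⋃ i ∈ s, f i).ncard ≤ ∑ i ∈ s, (f i).ncard := by
  classical
  induction s using Finset.induction with
  | empty => simp
  | @insert a s h ih =>
    rw [Finset.set_biUnion_insert, Finset.sum_insert h]
    exact le_trans (Set.ncard_union_le _ _) (by omega)

lemma ncard_prod {α β : Type*} (s : Set α) (t : Set β) (hs : s.Finite) (ht : t.Finite) :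
    (s ×ˢ t).ncard = s.ncard * t.ncard := by
  rw [show s ×ˢ t = ((hs.toFinset ×ˢ ht.toFinset : Finset _) : Set _) by simp]
  rw [Set.ncard_coe_finset, Finset.card_product,
    Set.ncard_eq_toFinset_card _ hs, Set.ncard_eq_toFinset_card _ ht]

lemma cogrowth_term_le (hm : 2 ≤ m) (g : Fin m → G) (n : ℕ) :
    Real.logb (2 * m : ℝ) ((V g n).ncard : ℝ) / (n : ℝ) ≤ 1 := by
  have hb : (1:ℝ) < 2 * m := by
    have : (2:ℝ) ≤ (m:ℝ) := by exact_mod_cast hm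
    nlinarith
  rcases Nat.eq_zero_or_pos n with hn | hn
  · simp [hn]
  rcases Nat.eq_zero_or_pos (V g n).ncard with h0 | h0
  · simp [h0]
  have h1 : ((V g n).ncard : ℝ) ≤ ((2*m : ℕ) : ℝ)^n := by exact_mod_cast V_ncard_le g n
  have h2 : Real.logb (2*m : ℝ) ((V g n).ncard : ℝ) ≤ n := by
    rw [show ((2*m : ℕ) : ℝ) = (2*m : ℝ) by push_cast; ring] at h1
    calc Real.logb (2*m:ℝ) _ ≤ Real.logb (2*m:ℝ) ((2*m:ℝ)^n) :=
          Real.logb_le_logb_of_le hb (by exact_mod_cast h0) h1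
      _ = n := by rw [Real.logb_pow, Real.logb_self_eq_one hb, mul_one]
  rw [div_le_one (by exact_mod_cast hn)]
  exact h2


lemma two_m_gt_one {m : ℕ} (hm : 2 ≤ m) : (1:ℝ) < 2 * m := by
  have : (2:ℝ) ≤ (m:ℝ) := by exact_mod_cast hm
  nlinarith

lemma V_eventually_le (hm : 2 ≤ m) (g : Fin m → G) {θ' : ℝ} (hθ' : cogrowth g < θ') :
    ∃ N : ℕ, ∀ n ≥ N, ((V g n).ncard : ℝ) ≤ (2*m : ℝ) ^ (θ' * n) := by
  have hb := two_m_gt_one hm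
  have hbd : IsBoundedUnder (· ≤ ·) atTop
      (fun n : ℕ => Real.logb (2*m:ℝ) ((V g n).ncard : ℝ) / (n:ℝ)) :=
    isBoundedUnder_of ⟨1, cogrowth_term_le hm g⟩
  have hev := eventually_lt_of_limsup_lt hθ' hbd
  rw [eventually_atTop] at hev
  obtain ⟨N, hN⟩ := hev
  refine ⟨max N 1, fun n hn => ?_⟩
  have hn1 : 1 ≤ n := le_trans (le_max_right _ _) hn
  have h := hN n (le_trans (le_max_left _ _) hn)
  have hnp : (0:ℝ) < n := by exact_mod_cast hn1
  rw [div_lt_iff₀ hnp] at h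
  rcases Nat.eq_zero_or_pos (V g n).ncard with h0 | h0
  · rw [h0]
    push_cast
    positivity
  · have h2 := (Real.logb_lt_iff_lt_rpow hb (by exact_mod_cast h0)).mp
      (lt_of_lt_of_eq h (mul_comm _ _))
    rw [mul_comm (θ') (n:ℝ)]
    exact le_of_lt h2

/-- The set of "bad" subwords of length `k`. -/
def Bad (g : Fin m → G) (c : ℝ) (k : ℕ) : Set (Word m) :=
  {v | v.length = k ∧ (wlen g (eval g v) : ℝ) < c * k}

lemma Bad_subset_sphere (g : Fin m → G) (c : ℝ) (k : ℕ) : Bad g c k ⊆ sphere m k :=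
  fun _ hv => hv.1

lemma Bad_finite (g : Fin m → G) (c : ℝ) (k : ℕ) : (Bad g c k).Finite :=
  (sphere_finite m k).subset (Bad_subset_sphere g c k)

lemma Bad_ncard_le_sum (g : Fin m → G) (c : ℝ) (k : ℕ) :
    (Bad g c k).ncard ≤ ∑ ℓ ∈ Finset.range (⌊c*k⌋₊ + 1), (V g (k+ℓ)).ncard := by
  classical
  set L := ⌊c*k⌋₊
  set φ : Word m → Word m := fun v => v ++ winv (Classical.choose (wlen_exists g v)) with hφ
  have hmem : ∀ v ∈ Bad g c k, φ v ∈ ⋃ ℓ ∈ Finset.range (L+1), V g (k+ℓ) := by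
    rintro v ⟨hvl, hvw⟩
    obtain ⟨hul, hue⟩ := Classical.choose_spec (wlen_exists g v)
    set u := Classical.choose (wlen_exists g v)
    have hL : wlen g (eval g v) ≤ L := Nat.le_floor (le_of_lt hvw)
    refine Set.mem_biUnion (Finset.mem_range.mpr (Nat.lt_succ_of_le hL)) ?_
    constructor
    · rw [List.length_append, length_winv, hul, hvl]
    · rw [eval_append, eval_winv, hue, mul_inv_cancel]
  have hinj : Set.InjOn φ (Bad g c k) := by
    intro v1 h1 v2 h2 he
    have t1 : (φ v1).take k = v1 := by rw [hφ]; exact List.take_left' h1.1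
    have t2 : (φ v2).take k = v2 := by rw [hφ]; exact List.take_left' h2.1
    rw [← t1, ← t2, he]
  have hfin : (⋃ ℓ ∈ Finset.range (L+1), V g (k+ℓ)).Finite :=
    Set.Finite.biUnion (Finset.range (L+1)).finite_toSet
      (fun ℓ _ => (sphere_finite m (k+ℓ)).subset (V_subset_sphere g (k+ℓ)))
  exact le_trans (Set.ncard_le_ncard_of_injOn φ hmem hinj hfin)
    (ncard_biUnion_le _ _)

/-- Words of length `j` whose factor at position `i` of length `k` is bad. -/
def Tset (g : Fin m → G) (c : ℝ) (j i k : ℕ) : Set (Word m) :=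
  {w | w.length = j ∧ i + k ≤ j ∧ ((w.drop i).take k) ∈ Bad g c k}

lemma Tset_ncard_le (g : Fin m → G) (c : ℝ) (j i k : ℕ) :
    (Tset g c j i k).ncard ≤ (2*m)^(j-k) * (Bad g c k).ncard := by
  classical
  set ψ : Word m → Word m × Word m :=
    fun w => (w.take i ++ w.drop (i+k), (w.drop i).take k) with hψ
  have hrec : ∀ w ∈ Tset g c j i k,
      w = (ψ w).1.take i ++ (ψ w).2 ++ (ψ w).1.drop i := by
    rintro w ⟨hwl, hik, hbad⟩
    have hti : (w.take i).length = i := by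
      rw [List.length_take]; omega
    have e1 : (ψ w).1.take i = w.take i := by
      rw [hψ]; exact List.take_left' hti
    have e2 : (ψ w).1.drop i = w.drop (i+k) := by
      rw [hψ]; exact List.drop_left' hti
    rw [e1, e2, hψ]
    simp only
    rw [List.append_assoc]
    nth_rw 1 [← List.take_append_drop i w]
    congr 1
    rw [← List.drop_drop]
    exact (List.take_append_drop k (w.drop i)).symm
  have hmem : ∀ w ∈ Tset g c j i k, ψ w ∈ (sphere m (j-k)) ×ˢ (Bad g c k) := by
    rintro w ⟨hwl, hik, hbad⟩
    constructor
    · show ((w.take i) ++ (w.drop (i+k))).length = j - k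
      rw [List.length_append, List.length_take, List.length_drop, hwl]
      omega
    · exact hbad
  have hinj : Set.InjOn ψ (Tset g c j i k) := by
    intro w1 h1 w2 h2 he
    rw [hrec w1 h1, hrec w2 h2, he]
  have hfin : ((sphere m (j-k)) ×ˢ (Bad g c k)).Finite :=
    (sphere_finite m (j-k)).prod (Bad_finite g c k)
  refine le_trans (Set.ncard_le_ncard_of_injOn ψ hmem hinj hfin) ?_
  rw [ncard_prod _ _ (sphere_finite m (j-k)) (Bad_finite g c k), sphere_ncard]


lemma Bad_ncard_real (hm : 2 ≤ m) (g : Fin m → G) {θ' c : ℝ} (hθ'0 : 0 < θ') (hc : 0 ≤ c)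
    {N k : ℕ} (hV : ∀ n ≥ N, ((V g n).ncard : ℝ) ≤ (2*m : ℝ) ^ (θ' * n)) (hk : N ≤ k) :
    ((Bad g c k).ncard : ℝ) ≤ (c*k+1) * (2*m : ℝ) ^ (θ' * (1+c) * k) := by
  have hb := two_m_gt_one hm
  have hck : (0:ℝ) ≤ c * k := mul_nonneg hc (Nat.cast_nonneg k)
  have h1 : ((Bad g c k).ncard : ℝ) ≤
      ∑ ℓ ∈ Finset.range (⌊c*k⌋₊ + 1), ((V g (k+ℓ)).ncard : ℝ) := by
    rw [← Nat.cast_sum]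
    exact_mod_cast Bad_ncard_le_sum g c k
  have h2 : ∀ ℓ ∈ Finset.range (⌊c*k⌋₊ + 1),
      ((V g (k+ℓ)).ncard : ℝ) ≤ (2*m : ℝ) ^ (θ' * (1+c) * k) := by
    intro ℓ hℓ
    have hℓ' : (ℓ:ℝ) ≤ c * k := by
      have : ℓ ≤ ⌊c*k⌋₊ := Nat.lt_succ_iff.mp (Finset.mem_range.mp hℓ)
      exact le_trans (by exact_mod_cast this) (Nat.floor_le hck)
    refine le_trans (hV (k+ℓ) (le_trans hk (Nat.le_add_right _ _))) ?_
    apply Real.rpow_le_rpow_of_exponent_le (le_of_lt hb)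
    have : ((k+ℓ:ℕ):ℝ) = (k:ℝ) + ℓ := by push_cast; ring
    rw [this]
    nlinarith [Nat.cast_nonneg (α := ℝ) k, Nat.cast_nonneg (α := ℝ) ℓ]
  have h3 : ∑ ℓ ∈ Finset.range (⌊c*k⌋₊ + 1), ((V g (k+ℓ)).ncard : ℝ) ≤
      ((⌊c*k⌋₊ + 1 : ℕ) : ℝ) * (2*m : ℝ) ^ (θ' * (1+c) * k) := by
    have := Finset.sum_le_card_nsmul _ _ _ h2
    rwa [Finset.card_range, nsmul_eq_mul] at this
  refine le_trans h1 (le_trans h3 ?_)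
  apply mul_le_mul_of_nonneg_right _ (le_of_lt (Real.rpow_pos_of_pos (by linarith) _))
  push_cast
  have := Nat.floor_le hck
  linarith

lemma compl_subset_biUnion (g : Fin m → G) (c ε : ℝ) (j : ℕ) :
    {w : Word m | ∀ u v u' : Word m, w = u ++ v ++ u' →
        ε * (w.length : ℝ) ≤ (v.length : ℝ) →
        c * (v.length : ℝ) ≤ (wlen g (eval g v) : ℝ)}ᶜ ∩ sphere m j ⊆
      ⋃ p ∈ ((Finset.range (j+1) ×ˢ Finset.range (j+1)).filter
        (fun p : ℕ × ℕ => ε * (j:ℝ) ≤ (p.2:ℝ))), Tset g c j p.1 p.2 := by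
  classical
  rintro w ⟨hw, hwj⟩
  simp only [Set.mem_compl_iff, Set.mem_setOf_eq] at hw
  push_neg at hw
  obtain ⟨u, v, u', hdec, hεv, hbad⟩ := hw
  have hwj' : w.length = j := hwj
  have hlen : u.length + v.length + u'.length = j := by
    rw [← hwj', hdec]; simp [List.length_append]; ring
  simp only [Set.mem_iUnion, exists_prop]
  refine ⟨(u.length, v.length), ?_, ?_⟩
  · rw [Finset.mem_filter]
    constructor
    · rw [Finset.mem_product, Finset.mem_range, Finset.mem_range]
      constructor <;> omega
    · rw [← hwj']; exact hεv
  · refine ⟨hwj', by omega, ?_, ?_⟩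
    · have : (w.drop u.length).take v.length = v := by
        rw [hdec, List.append_assoc, List.drop_left, List.take_left]
      rw [this]
    · have : (w.drop u.length).take v.length = v := by
        rw [hdec, List.append_assoc, List.drop_left, List.take_left]
      rw [this]
      exact hbad

lemma poly_mul_geom_tendsto (k : ℕ) {α : ℝ} (h0 : 0 < α) (h1 : α < 1) :
    Filter.Tendsto (fun n : ℕ => ((n:ℝ)+1)^k * α^n) atTop (nhds 0) := by
  have hn : ‖α‖ < 1 := by rw [Real.norm_eq_abs, abs_of_pos h0]; exact h1
  have hs : Filter.Tendsto (fun n : ℕ => (n:ℝ)^k * α^n) atTop (nhds 0) :=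
    (summable_pow_mul_geometric_of_norm_lt_one k hn).tendsto_atTop_zero
  have hshift : Filter.Tendsto (fun n : ℕ => ((n+1:ℕ):ℝ)^k * α^(n+1)) atTop (nhds 0) :=
    hs.comp (tendsto_add_atTop_nat 1)
  have : Filter.Tendsto (fun n : ℕ => (1/α) * (((n+1:ℕ):ℝ)^k * α^(n+1))) atTop (nhds 0) := by
    simpa using hshift.const_mul (1/α)
  refine this.congr (fun n => ?_)
  push_cast
  field_simp
  ring


set_option maxHeartbeats 1000000 in
lemma core (hm : 2 ≤ m) (g : Fin m → G) {c ε θ' δ₀ : ℝ} {N : ℕ}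
    (hε : 0 < ε) (hc : 0 < c) (hθ'0 : 0 < θ')
    (hδ₀pos : 0 < δ₀) (hδ₀δ : δ₀ ≤ 1 - θ'*(1+c)) (hδ₀ε : δ₀*ε ≤ 1/2)
    (hV : ∀ n ≥ N, ((V g n).ncard : ℝ) ≤ (2*(m:ℝ))^(θ'*(n:ℝ))) :
    ExpNegligible {w : Word m | ∀ u v u' : Word m, w = u ++ v ++ u' →
      ε * (w.length : ℝ) ≤ (v.length : ℝ) →
      c * (v.length : ℝ) ≤ (wlen g (eval g v) : ℝ)}ᶜ := by
  classical
  set J₀ : ℕ := ⌈(N:ℝ)/ε⌉₊ + 1 with hJ₀def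
  have hJ₀N : ∀ j k : ℕ, J₀ ≤ j → ε*(j:ℝ) ≤ (k:ℝ) → N ≤ k := by
    intro j k hj hk
    have h1 : (N:ℝ)/ε ≤ (⌈(N:ℝ)/ε⌉₊ : ℝ) := Nat.le_ceil _
    have h2 : ((⌈(N:ℝ)/ε⌉₊ : ℕ):ℝ) ≤ (j:ℝ) := by
      exact_mod_cast le_trans (Nat.le_succ _) hj
    rw [div_le_iff₀ hε] at h1
    have h3 : (N:ℝ) ≤ (k:ℝ) := by nlinarith
    exact_mod_cast h3
  have hb : (1:ℝ) < 2*(m:ℝ) := two_m_gt_one hm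
  have hb0 : (0:ℝ) < 2*(m:ℝ) := by linarith
  set r : ℝ := (2*(m:ℝ))^(-(δ₀*ε)) with hrdef
  have hr0 : 0 < r := Real.rpow_pos_of_pos hb0 _
  have hr1 : r < 1 :=
    Real.rpow_lt_one_of_one_lt_of_neg hb (by nlinarith [mul_pos hδ₀pos hε])
  set α : ℝ := Real.sqrt r with hαdef
  have hα0 : 0 < α := Real.sqrt_pos.mpr hr0
  have hα1 : α < 1 := by
    rw [hαdef, show (1:ℝ) = Real.sqrt 1 by rw [Real.sqrt_one]]
    exact Real.sqrt_lt_sqrt (le_of_lt hr0) hr1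
  have hαsq : α*α = r := Real.mul_self_sqrt (le_of_lt hr0)
  -- per-sphere bound
  have key : ∀ j : ℕ, J₀ ≤ j →
      (({w : Word m | ∀ u v u' : Word m, w = u ++ v ++ u' →
        ε * (w.length : ℝ) ≤ (v.length : ℝ) →
        c * (v.length : ℝ) ≤ (wlen g (eval g v) : ℝ)}ᶜ ∩ sphere m j).ncard : ℝ) ≤
      ((j:ℝ)+1)^2 * (c*(j:ℝ)+1) * (2*(m:ℝ))^((1-δ₀*ε)*(j:ℝ)) := by
    intro j hj
    set P := (Finset.range (j+1) ×ˢ Finset.range (j+1)).filter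
      (fun p : ℕ × ℕ => ε * (j:ℝ) ≤ (p.2:ℝ)) with hPdef
    have hsub := compl_subset_biUnion g c ε j
    have hfinU : (⋃ p ∈ P, Tset g c j p.1 p.2).Finite :=
      Set.Finite.biUnion P.finite_toSet
        (fun p _ => (sphere_finite m j).subset (fun w hw => hw.1))
    have h1 : ∀ p ∈ P, ((Tset g c j p.1 p.2).ncard : ℝ) ≤
        (c*(j:ℝ)+1) * (2*(m:ℝ))^((1-δ₀*ε)*(j:ℝ)) := by
      intro p hp
      obtain ⟨hpmem, hpε⟩ := Finset.mem_filter.mp hp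
      obtain ⟨hp1, hp2⟩ := Finset.mem_product.mp hpmem
      have hkj : p.2 ≤ j := Nat.lt_succ_iff.mp (Finset.mem_range.mp hp2)
      have hkN : N ≤ p.2 := hJ₀N j p.2 hj hpε
      have hT := Tset_ncard_le g c j p.1 p.2
      have hBad := Bad_ncard_real hm g hθ'0 (le_of_lt hc) hV hkN
      have hTr : ((Tset g c j p.1 p.2).ncard : ℝ) ≤
          ((2*(m:ℝ))^((j - p.2 : ℕ):ℝ)) * ((Bad g c p.2).ncard : ℝ) := by
        have hcast : (((2*m)^(j-p.2) * (Bad g c p.2).ncard : ℕ) : ℝ) =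
            ((2*(m:ℝ))^((j - p.2 : ℕ):ℝ)) * ((Bad g c p.2).ncard : ℝ) := by
          push_cast
          rw [Real.rpow_natCast]
        rw [← hcast]
        exact_mod_cast hT
      have hexp : ((j - p.2 : ℕ):ℝ) + θ'*(1+c)*(p.2:ℝ) ≤ (1-δ₀*ε)*(j:ℝ) := by
        have hc2 : ((j - p.2 : ℕ):ℝ) = (j:ℝ) - (p.2:ℝ) := by
          rw [Nat.cast_sub hkj]
        rw [hc2]
        have h4 : δ₀*(p.2:ℝ) ≥ δ₀*(ε*(j:ℝ)) := mul_le_mul_of_nonneg_left hpε (le_of_lt hδ₀pos)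
        have h5 : (1 - θ'*(1+c))*(p.2:ℝ) ≥ δ₀*(p.2:ℝ) :=
          mul_le_mul_of_nonneg_right hδ₀δ (Nat.cast_nonneg _)
        nlinarith
      calc ((Tset g c j p.1 p.2).ncard : ℝ)
          ≤ ((2*(m:ℝ))^((j - p.2 : ℕ):ℝ)) * ((Bad g c p.2).ncard : ℝ) := hTr
        _ ≤ ((2*(m:ℝ))^((j - p.2 : ℕ):ℝ)) *
            ((c*(p.2:ℝ)+1) * (2*(m:ℝ))^(θ'*(1+c)*(p.2:ℝ))) := by
            apply mul_le_mul_of_nonneg_left hBad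
              (le_of_lt (Real.rpow_pos_of_pos hb0 _))
        _ = (c*(p.2:ℝ)+1) * (2*(m:ℝ))^(((j - p.2 : ℕ):ℝ) + θ'*(1+c)*(p.2:ℝ)) := by
            rw [Real.rpow_add hb0]; ring
        _ ≤ (c*(j:ℝ)+1) * (2*(m:ℝ))^((1-δ₀*ε)*(j:ℝ)) := by
            apply mul_le_mul
            · have : (p.2:ℝ) ≤ (j:ℝ) := by exact_mod_cast hkj
              nlinarith
            · exact Real.rpow_le_rpow_of_exponent_le (le_of_lt hb) hexp
            · exact le_of_lt (Real.rpow_pos_of_pos hb0 _)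
            · have : (0:ℝ) ≤ (j:ℝ) := Nat.cast_nonneg _
              nlinarith
    have h2 : (({w : Word m | ∀ u v u' : Word m, w = u ++ v ++ u' →
        ε * (w.length : ℝ) ≤ (v.length : ℝ) →
        c * (v.length : ℝ) ≤ (wlen g (eval g v) : ℝ)}ᶜ ∩ sphere m j).ncard : ℝ) ≤
        ∑ p ∈ P, ((Tset g c j p.1 p.2).ncard : ℝ) := by
      rw [← Nat.cast_sum]
      exact_mod_cast le_trans (Set.ncard_le_ncard hsub hfinU) (ncard_biUnion_le _ _)
    have h3 : ∑ p ∈ P, ((Tset g c j p.1 p.2).ncard : ℝ) ≤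
        (P.card : ℝ) * ((c*(j:ℝ)+1) * (2*(m:ℝ))^((1-δ₀*ε)*(j:ℝ))) := by
      have := Finset.sum_le_card_nsmul P _ _ h1
      rwa [nsmul_eq_mul] at this
    have h4 : (P.card : ℝ) ≤ ((j:ℝ)+1)^2 := by
      have h5 : P.card ≤ (j+1)*(j+1) := by
        refine le_trans (Finset.card_filter_le _ _) ?_
        rw [Finset.card_product, Finset.card_range]
      calc (P.card : ℝ) ≤ (((j+1)*(j+1) : ℕ) : ℝ) := by exact_mod_cast h5
        _ = ((j:ℝ)+1)^2 := by push_cast; ring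
    have hbnd0 : (0:ℝ) ≤ (c*(j:ℝ)+1) * (2*(m:ℝ))^((1-δ₀*ε)*(j:ℝ)) := by
      apply mul_nonneg
      · have : (0:ℝ) ≤ (j:ℝ) := Nat.cast_nonneg _
        nlinarith
      · exact le_of_lt (Real.rpow_pos_of_pos hb0 _)
    calc _ ≤ (P.card : ℝ) * ((c*(j:ℝ)+1) * (2*(m:ℝ))^((1-δ₀*ε)*(j:ℝ))) :=
          le_trans h2 h3
      _ ≤ ((j:ℝ)+1)^2 * ((c*(j:ℝ)+1) * (2*(m:ℝ))^((1-δ₀*ε)*(j:ℝ))) :=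
          mul_le_mul_of_nonneg_right h4 hbnd0
      _ = ((j:ℝ)+1)^2 * (c*(j:ℝ)+1) * (2*(m:ℝ))^((1-δ₀*ε)*(j:ℝ)) := by ring
  -- global assembly
  set C₀ : ℝ := ((ball m J₀).ncard : ℝ) with hC₀def
  have hC₀0 : 0 ≤ C₀ := Nat.cast_nonneg _
  have htend : Tendsto (fun n : ℕ => C₀*α^n + (c+1)*(((n:ℝ)+1)^4*α^n)) atTop (nhds 0) := by
    have t4 := poly_mul_geom_tendsto 4 hα0 hα1
    have t0 := tendsto_pow_atTop_nhds_zero_of_lt_one (le_of_lt hα0) hα1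
    simpa using (t0.const_mul C₀).add (t4.const_mul (c+1))
  have hev1 : ∀ᶠ n : ℕ in atTop,
      C₀*α^n + (c+1)*(((n:ℝ)+1)^4*α^n) < 1 := htend.eventually (gt_mem_nhds one_pos)
  refine ⟨α, hα0, hα1, ?_⟩
  filter_upwards [hev1, eventually_ge_atTop J₀] with n hn1 hnJ
  set Xc : Set (Word m) := {w : Word m | ∀ u v u' : Word m, w = u ++ v ++ u' →
    ε * (w.length : ℝ) ≤ (v.length : ℝ) →
    c * (v.length : ℝ) ≤ (wlen g (eval g v) : ℝ)}ᶜ with hXcdef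
  have hsub2 : Xc ∩ ball m n ⊆ ball m J₀ ∪ ⋃ j ∈ Finset.Icc J₀ n, (Xc ∩ sphere m j) := by
    rintro w ⟨hwX, hwb⟩
    by_cases hlen : w.length ≤ J₀
    · exact Or.inl hlen
    · right
      simp only [Set.mem_iUnion, exists_prop]
      exact ⟨w.length, Finset.mem_Icc.mpr ⟨by omega, hwb⟩, hwX, rfl⟩
  have hfin2 : (ball m J₀ ∪ ⋃ j ∈ Finset.Icc J₀ n, (Xc ∩ sphere m j)).Finite :=
    (ball_finite m J₀).union (Set.Finite.biUnion (Finset.Icc J₀ n).finite_toSet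
      (fun j _ => (sphere_finite m j).subset (Set.inter_subset_right)))
  have hcount : (Xc ∩ ball m n).ncard ≤
      (ball m J₀).ncard + ∑ j ∈ Finset.Icc J₀ n, (Xc ∩ sphere m j).ncard :=
    le_trans (Set.ncard_le_ncard hsub2 hfin2)
      (le_trans (Set.ncard_union_le _ _) (add_le_add_right (ncard_biUnion_le _ _) _))
  have hterm : ∀ j ∈ Finset.Icc J₀ n, ((Xc ∩ sphere m j).ncard : ℝ) ≤
      ((n:ℝ)+1)^2*(c*(n:ℝ)+1)*(2*(m:ℝ))^((1-δ₀*ε)*(n:ℝ)) := by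
    intro j hj
    obtain ⟨hj1, hj2⟩ := Finset.mem_Icc.mp hj
    refine le_trans (key j hj1) ?_
    have hjn : (j:ℝ) ≤ (n:ℝ) := by exact_mod_cast hj2
    have hj0 : (0:ℝ) ≤ (j:ℝ) := Nat.cast_nonneg _
    have hn0' : (0:ℝ) ≤ (n:ℝ) := Nat.cast_nonneg _
    have hd1 : (0:ℝ) ≤ 1-δ₀*ε := by linarith
    have hexp2 : (1-δ₀*ε)*(j:ℝ) ≤ (1-δ₀*ε)*(n:ℝ) := mul_le_mul_of_nonneg_left hjn hd1
    have e1 : ((j:ℝ)+1)^2 ≤ ((n:ℝ)+1)^2 := by nlinarith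
    have e2 : c*(j:ℝ)+1 ≤ c*(n:ℝ)+1 := by nlinarith [mul_le_mul_of_nonneg_left hjn (le_of_lt hc)]
    have e3 : (0:ℝ) ≤ c*(n:ℝ)+1 := by nlinarith [mul_nonneg (le_of_lt hc) hn0']
    have e5 : (0:ℝ) ≤ c*(j:ℝ)+1 := by nlinarith [mul_nonneg (le_of_lt hc) hj0]
    have e6 := Real.rpow_le_rpow_of_exponent_le (le_of_lt hb) hexp2
    have e7 : (0:ℝ) ≤ (2*(m:ℝ))^((1-δ₀*ε)*(j:ℝ)) := le_of_lt (Real.rpow_pos_of_pos hb0 _)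
    exact mul_le_mul (mul_le_mul e1 e2 e5 (by positivity)) e6 e7
      (mul_nonneg (by positivity) e3)
  have hsumT : ∑ j ∈ Finset.Icc J₀ n, ((Xc ∩ sphere m j).ncard : ℝ) ≤
      ((n:ℝ)+1) * (((n:ℝ)+1)^2*(c*(n:ℝ)+1)*(2*(m:ℝ))^((1-δ₀*ε)*(n:ℝ))) := by
    have h5 := Finset.sum_le_card_nsmul (Finset.Icc J₀ n) _ _ hterm
    rw [nsmul_eq_mul] at h5
    refine le_trans h5 (mul_le_mul_of_nonneg_right ?_ ?_)
    · have : (Finset.Icc J₀ n).card ≤ n+1 := by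
        rw [Nat.card_Icc]; omega
      calc ((Finset.Icc J₀ n).card : ℝ) ≤ ((n+1 : ℕ) : ℝ) := by exact_mod_cast this
        _ = (n:ℝ)+1 := by push_cast; ring
    · have hn0 : (0:ℝ) ≤ (n:ℝ) := Nat.cast_nonneg _
      have e3 : (0:ℝ) ≤ c*(n:ℝ)+1 := by nlinarith [mul_nonneg (le_of_lt hc) hn0]
      exact mul_nonneg (mul_nonneg (by positivity) e3)
        (le_of_lt (Real.rpow_pos_of_pos hb0 ((1-δ₀*ε)*(n:ℝ))))
  have hA : ((Xc ∩ ball m n).ncard : ℝ) ≤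
      C₀ + ((n:ℝ)+1)^3*(c*(n:ℝ)+1)*(2*(m:ℝ))^((1-δ₀*ε)*(n:ℝ)) := by
    have hcast : ((Xc ∩ ball m n).ncard : ℝ) ≤
        C₀ + ∑ j ∈ Finset.Icc J₀ n, ((Xc ∩ sphere m j).ncard : ℝ) := by
      rw [hC₀def, ← Nat.cast_sum, ← Nat.cast_add]
      exact_mod_cast hcount
    refine le_trans hcast ?_
    have hring : ((n:ℝ)+1) * (((n:ℝ)+1)^2*(c*(n:ℝ)+1)*(2*(m:ℝ))^((1-δ₀*ε)*(n:ℝ))) =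
        ((n:ℝ)+1)^3*(c*(n:ℝ)+1)*(2*(m:ℝ))^((1-δ₀*ε)*(n:ℝ)) := by ring
    linarith [hsumT]
  have hden : ((2*(m:ℝ))^(n:ℕ) : ℝ) ≤ ((ball m n).ncard : ℝ) := by
    have := ball_ncard_ge m n
    calc ((2*(m:ℝ))^(n:ℕ) : ℝ) = (((2*m)^n : ℕ) : ℝ) := by push_cast; ring
      _ ≤ _ := by exact_mod_cast this
  have hden0 : (0:ℝ) < (2*(m:ℝ))^(n:ℕ) := pow_pos hb0 n
  have hA0 : (0:ℝ) ≤ ((Xc ∩ ball m n).ncard : ℝ) := Nat.cast_nonneg _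
  have step1 : ((Xc ∩ ball m n).ncard : ℝ) / ((ball m n).ncard : ℝ) ≤
      ((Xc ∩ ball m n).ncard : ℝ) / (2*(m:ℝ))^(n:ℕ) := by
    gcongr
  have hgeom : (2*(m:ℝ))^((1-δ₀*ε)*(n:ℝ)) / (2*(m:ℝ))^(n:ℕ) = r^n := by
    rw [← Real.rpow_natCast (2*(m:ℝ)) n, ← Real.rpow_sub hb0, hrdef,
      ← Real.rpow_natCast ((2*(m:ℝ))^(-(δ₀*ε))) n, ← Real.rpow_mul (le_of_lt hb0)]
    congr 1
    ring
  have hgeom2 : (1:ℝ) / (2*(m:ℝ))^(n:ℕ) ≤ r^n := by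
    rw [← hgeom]
    rw [div_le_div_iff_of_pos_right hden0]
    calc (1:ℝ) = (2*(m:ℝ))^((0:ℝ)) := by rw [Real.rpow_zero]
      _ ≤ (2*(m:ℝ))^((1-δ₀*ε)*(n:ℝ)) := by
        apply Real.rpow_le_rpow_of_exponent_le (le_of_lt hb)
        have hn0 : (0:ℝ) ≤ (n:ℝ) := Nat.cast_nonneg _
        have hd1 : (0:ℝ) ≤ 1-δ₀*ε := by linarith
        exact mul_nonneg hd1 hn0
  have step2 : ((Xc ∩ ball m n).ncard : ℝ) / (2*(m:ℝ))^(n:ℕ) ≤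
      (C₀ + ((n:ℝ)+1)^3*(c*(n:ℝ)+1)) * r^n := by
    rw [div_le_iff₀ hden0]
    have hr_n : (2*(m:ℝ))^((1-δ₀*ε)*(n:ℝ)) = r^n * (2*(m:ℝ))^(n:ℕ) :=
      (div_eq_iff (ne_of_gt hden0)).mp hgeom
    have hr_n2 : (1:ℝ) ≤ r^n * (2*(m:ℝ))^(n:ℕ) := by
      have h6 := hgeom2
      rw [div_le_iff₀ hden0] at h6
      linarith
    have hn0 : (0:ℝ) ≤ (n:ℝ) := Nat.cast_nonneg _
    have e3 : (0:ℝ) ≤ c*(n:ℝ)+1 := by nlinarith [mul_nonneg (le_of_lt hc) hn0]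
    have hpoly0 : (0:ℝ) ≤ ((n:ℝ)+1)^3*(c*(n:ℝ)+1) := mul_nonneg (by positivity) e3
    calc ((Xc ∩ ball m n).ncard : ℝ)
        ≤ C₀ + ((n:ℝ)+1)^3*(c*(n:ℝ)+1)*(2*(m:ℝ))^((1-δ₀*ε)*(n:ℝ)) := hA
      _ ≤ C₀ * (r^n * (2*(m:ℝ))^(n:ℕ)) +
          ((n:ℝ)+1)^3*(c*(n:ℝ)+1)*(r^n * (2*(m:ℝ))^(n:ℕ)) := by
          have e1 : C₀ ≤ C₀ * (r^n * (2*(m:ℝ))^(n:ℕ)) := le_mul_of_one_le_right hC₀0 hr_n2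
          have e2 : ((n:ℝ)+1)^3*(c*(n:ℝ)+1)*(2*(m:ℝ))^((1-δ₀*ε)*(n:ℝ)) =
              ((n:ℝ)+1)^3*(c*(n:ℝ)+1)*(r^n * (2*(m:ℝ))^(n:ℕ)) := by rw [hr_n]
          linarith
      _ = (C₀ + ((n:ℝ)+1)^3*(c*(n:ℝ)+1)) * r^n * (2*(m:ℝ))^(n:ℕ) := by ring
  have hbracket : (C₀ + ((n:ℝ)+1)^3*(c*(n:ℝ)+1)) * α^n ≤ 1 := by
    have hn0 : (0:ℝ) ≤ (n:ℝ) := Nat.cast_nonneg _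
    have hα_n : (0:ℝ) ≤ α^n := pow_nonneg (le_of_lt hα0) n
    have h6 : ((n:ℝ)+1)^3*(c*(n:ℝ)+1) ≤ (c+1)*((n:ℝ)+1)^4 := by
      have key6 : (0:ℝ) ≤ ((n:ℝ)+1)^3*(c+(n:ℝ)) :=
        mul_nonneg (pow_nonneg (by linarith) 3) (by linarith)
      nlinarith [key6]
    have h7 : (C₀ + ((n:ℝ)+1)^3*(c*(n:ℝ)+1)) * α^n ≤
        C₀*α^n + (c+1)*(((n:ℝ)+1)^4*α^n) := by
      nlinarith [mul_le_mul_of_nonneg_right h6 hα_n]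
    linarith
  have hrn : r^n = α^n * α^n := by rw [← hαsq, mul_pow]
  calc ((Xc ∩ ball m n).ncard : ℝ) / ((ball m n).ncard : ℝ)
      ≤ ((Xc ∩ ball m n).ncard : ℝ) / (2*(m:ℝ))^(n:ℕ) := step1
    _ ≤ (C₀ + ((n:ℝ)+1)^3*(c*(n:ℝ)+1)) * r^n := step2
    _ = ((C₀ + ((n:ℝ)+1)^3*(c*(n:ℝ)+1)) * α^n) * α^n := by rw [hrn]; ring
    _ ≤ 1 * α^n := mul_le_mul_of_nonneg_right hbracket (pow_nonneg (le_of_lt hα0) n)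
    _ = α^n := one_mul _


/-- Lemma `quasi`(1): if `G` is non-amenable (`θ < 1`), then for every
`ε > 0` the set of words `w` such that every contiguous subword `v` of `w` with
`|v| ≥ ε|w|` satisfies `|v̄| ≥ ((1-θ)/θ - ε)|v|` is exponentially generic. -/
theorem generic_subword_length_lower_bound (m : ℕ) (hm : 2 ≤ m) {G : Type*} [Group G]
    (g : Fin m → G) (hsurj : Function.Surjective (eval g))
    (hθ : cogrowth g < 1) (ε : ℝ) (hε : 0 < ε) :
    ExpGeneric {w : Word m | ∀ u v u' : Word m, w = u ++ v ++ u' →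
      ε * (w.length : ℝ) ≤ (v.length : ℝ) →
      ((1 - cogrowth g) / cogrowth g - ε) * (v.length : ℝ) ≤ (wlen g (eval g v) : ℝ)} := by
  classical
  show ExpNegligible _
  by_cases hc : (1 - cogrowth g) / cogrowth g - ε ≤ 0
  · refine ⟨1/2, by norm_num, by norm_num, Eventually.of_forall fun n => ?_⟩
    have hX : ({w : Word m | ∀ u v u' : Word m, w = u ++ v ++ u' →
        ε * (w.length : ℝ) ≤ (v.length : ℝ) →
        ((1 - cogrowth g) / cogrowth g - ε) * (v.length : ℝ) ≤ (wlen g (eval g v) : ℝ)}ᶜ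
          : Set (Word m)) = ∅ := by
      rw [Set.compl_empty_iff]
      ext w
      simp only [Set.mem_setOf_eq, Set.mem_univ, iff_true]
      intro u v u' _ _
      have h1 : ((1 - cogrowth g) / cogrowth g - ε) * (v.length:ℝ) ≤ 0 :=
        mul_nonpos_of_nonpos_of_nonneg hc (Nat.cast_nonneg _)
      exact le_trans h1 (Nat.cast_nonneg _)
    rw [hX]
    simp only [Set.empty_inter, Set.ncard_empty, Nat.cast_zero, zero_div]
    positivity
  · push_neg at hc
    obtain ⟨θ, hθdef⟩ : ∃ θ : ℝ, cogrowth g = θ := ⟨_, rfl⟩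
    rw [hθdef] at hc hθ ⊢
    have hθ1 : θ < 1 := hθ
    have hθ0 : 0 < θ := by
      by_contra h
      push_neg at h
      rcases eq_or_lt_of_le h with h' | h'
      · rw [h', div_zero] at hc; linarith
      · have h2 : (1-θ)/θ < 0 := div_neg_of_pos_of_neg (by linarith) h'
        linarith
    have hεθ : ε * θ < 1 - θ := by
      have h2 : ε < (1-θ)/θ := by linarith
      exact (lt_div_iff₀ hθ0).mp h2
    have h1εθ : 0 < 1 - ε*θ := by linarith
    have hfrac : θ < θ/(1-ε*θ) := by
      rw [lt_div_iff₀ h1εθ]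
      nlinarith [mul_pos hε hθ0]
    obtain ⟨θ', hθ'def⟩ : ∃ x : ℝ, (θ + θ/(1-ε*θ))/2 = x := ⟨_, rfl⟩
    have hθθ' : θ < θ' := by rw [← hθ'def]; linarith
    have hθ'f : θ' < θ/(1-ε*θ) := by rw [← hθ'def]; linarith
    have hθ'0 : 0 < θ' := by linarith
    have h1c : 1 + ((1-θ)/θ - ε) = (1-ε*θ)/θ := by field_simp; ring
    have hδpos : 0 < 1 - θ'*(1+((1-θ)/θ - ε)) := by
      have h2 : θ'*(1+((1-θ)/θ - ε)) < (θ/(1-ε*θ))*((1-ε*θ)/θ) := by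
        rw [h1c]; exact mul_lt_mul_of_pos_right hθ'f (div_pos h1εθ hθ0)
      have h3 : (θ/(1-ε*θ))*((1-ε*θ)/θ) = 1 := by field_simp; exact div_self (ne_of_gt (by linarith))
      nlinarith [h2, h3]
    have hcpos : 0 < (1-θ)/θ - ε := by linarith
    obtain ⟨N, hV⟩ := V_eventually_le hm g (show cogrowth g < θ' from hθdef ▸ hθθ')
    have hδ₀pos : 0 < min (1 - θ'*(1+((1-θ)/θ - ε))) (1/(2*ε)) := lt_min hδpos (by positivity)
    have hδ₀δ : min (1 - θ'*(1+((1-θ)/θ - ε))) (1/(2*ε)) ≤ 1 - θ'*(1+((1-θ)/θ - ε)) :=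
      min_le_left _ _
    have hδ₀ε : (min (1 - θ'*(1+((1-θ)/θ - ε))) (1/(2*ε)))*ε ≤ 1/2 := by
      have h1 : min (1 - θ'*(1+((1-θ)/θ - ε))) (1/(2*ε)) ≤ 1/(2*ε) := min_le_right _ _
      have h2 : (min (1 - θ'*(1+((1-θ)/θ - ε))) (1/(2*ε)))*ε ≤ (1/(2*ε))*ε :=
        mul_le_mul_of_nonneg_right h1 (le_of_lt hε)
      have h3 : (1/(2*ε))*ε = 1/2 := by
        field_simp
      linarith
    have hV' : ∀ n ≥ N, ((V g n).ncard : ℝ) ≤ (2*(m:ℝ))^(θ'*(n:ℝ)) := hV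
    exact core hm g hε hcpos hθ'0 hδ₀pos hδ₀δ hδ₀ε hV'


end GenericSubgroups
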